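/- For every n ≥ 0, the left-nested self-application Oₗ^{n+1} of the combinator O = λx.λy. y (x y) is βη-equal to λx. xⁿ (λy. y (x y)); hence O does not have the ρ-property. -/

import Mathlib

/-- Untyped lambda terms in de Bruijn representation. -/
inductive Lam : Type
  | var : Nat → Lam
  | app : Lam → Lam → Lam
  | lam : Lam → Lam
  deriving DecidableEq

namespace Lam

/-- Shift free variables `≥ d` up by one. -/
def lift (d : Nat) : Lam → Lam
  | var n => var (if n < d then n else n + 1)
  | app a b => app (lift d a) (lift d b)
  | lam a => lam (lift (d + 1) a)

/-- Substitute `s` for variable `d` (and lower the variables above `d`). -/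
def subst (d : Nat) (s : Lam) : Lam → Lam
  | var n => if n = d then s else if d < n then var (n - 1) else var n
  | app a b => app (subst d s a) (subst d s b)
  | lam a => lam (subst (d + 1) (lift 0 s) a)

/-- βη-equivalence of lambda terms. -/
inductive BetaEta : Lam → Lam → Prop
  | beta (t s : Lam) : BetaEta (app (lam t) s) (subst 0 s t)
  | eta (t : Lam) : BetaEta (lam (app (lift 0 t) (var 0))) t
  | refl (t : Lam) : BetaEta t t
  | symm {t s : Lam} : BetaEta t s → BetaEta s t
  | trans {t s u : Lam} : BetaEta t s → BetaEta s u → BetaEta t u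
  | congApp {t t' s s' : Lam} : BetaEta t t' → BetaEta s s' →
      BetaEta (app t s) (app t' s')
  | congLam {t t' : Lam} : BetaEta t t' → BetaEta (lam t) (lam t')

/-- The B combinator `λf.λg.λx. f (g x)`. -/
def B : Lam := lam (lam (lam (app (var 2) (app (var 1) (var 0)))))

/-- Left-nested self-application `X X ... X` with `k` copies (for `k ≥ 1`). -/
def sapp (X : Lam) : Nat → Lam
  | 0 => X
  | 1 => X
  | k + 2 => app (sapp X (k + 1)) X

end Lam

namespace Lam

/-- O = λx.λy. y (x y) -/
def O : Lam := lam (lam (app (var 0) (app (var 1) (var 0))))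

/-- n-fold application: npow e n a = e (e (... (e a))) -/
def npow (e : Lam) : Nat → Lam → Lam
  | 0, a => a
  | n + 1, a => app e (npow e n a)

set_option linter.unreachableTactic false
set_option linter.unusedTactic false

/-! ### Basic lemmas about lift and subst -/

theorem lift_lift {i j : Nat} (h : i ≤ j) : ∀ t, lift i (lift j t) = lift (j + 1) (lift i t) := by
  intro t
  induction t generalizing i j with
  | var n =>
    simp only [lift]
    split_ifs <;> first | rfl | (exfalso; omega) | (congr 1; omega)
  | app a b iha ihb => simp only [lift, iha h, ihb h]
  | lam a iha => simp only [lift, iha (by omega : i + 1 ≤ j + 1)]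

theorem subst_lift (d : Nat) (s : Lam) : ∀ t, subst d s (lift d t) = t := by
  intro t
  induction t generalizing d s with
  | var n =>
    simp only [lift, subst]
    split_ifs <;> first | rfl | (exfalso; omega) | (congr 1; omega)
  | app a b iha ihb => simp only [lift, subst, iha, ihb]
  | lam a iha => simp only [lift, subst, iha]

theorem subst_var_lift (d : Nat) : ∀ t, subst d (var d) (lift (d + 1) t) = t := by
  intro t
  induction t generalizing d with
  | var n =>
    simp only [lift, subst]
    split_ifs <;> first | rfl | (exfalso; omega) | (congr 1; omega)
  | app a b iha ihb => simp only [lift, subst, iha, ihb]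
  | lam a iha =>
    simp only [lift, subst]
    split_ifs with h1
    · exfalso; omega
    · rw [iha (d + 1)]

theorem lift_subst_le {j d : Nat} (h : j ≤ d) (s : Lam) :
    ∀ t, lift d (subst j s t) = subst j (lift d s) (lift (d + 1) t) := by
  intro t
  induction t generalizing j d s with
  | var n =>
    simp only [lift, subst]
    split_ifs <;> (try (exfalso; omega)) <;> simp only [lift, subst] <;>
      (try split_ifs) <;> first | rfl | (exfalso; omega) | (congr 1; omega)
  | app a b iha ihb => simp only [lift, subst, iha h, ihb h]
  | lam a iha =>
    simp only [lift, subst, iha (by omega : j + 1 ≤ d + 1)]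
    rw [lift_lift (Nat.zero_le d)]

theorem lift_subst_ge {e j : Nat} (h : e ≤ j) (s : Lam) :
    ∀ t, lift e (subst j s t) = subst (j + 1) (lift e s) (lift e t) := by
  intro t
  induction t generalizing e j s with
  | var n =>
    simp only [lift, subst]
    split_ifs <;> (try (exfalso; omega)) <;> simp only [lift, subst] <;>
      (try split_ifs) <;> first | rfl | (exfalso; omega) | (congr 1; omega)
  | app a b iha ihb => simp only [lift, subst, iha h, ihb h]
  | lam a iha =>
    simp only [lift, subst, iha (by omega : e + 1 ≤ j + 1)]
    rw [lift_lift (Nat.zero_le e)]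

theorem subst_subst {j d : Nat} (h : j ≤ d) (s a : Lam) :
    ∀ t, subst d s (subst j a t) =
      subst j (subst d s a) (subst (d + 1) (lift j s) t) := by
  intro t
  induction t generalizing j d s a with
  | var n =>
    simp only [subst]
    split_ifs <;> (try (exfalso; omega)) <;> simp only [subst, subst_lift] <;>
      (try split_ifs) <;> first | rfl | (exfalso; omega) | (congr 1; omega)
  | app x y ihx ihy => simp only [subst, ihx h, ihy h]
  | lam x ihx =>
    simp only [subst, ihx (by omega : j + 1 ≤ d + 1)]
    rw [lift_subst_ge (Nat.zero_le d), lift_lift (Nat.zero_le j)]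
/-! ### Parallel reduction -/

inductive Par : Lam → Lam → Prop
  | var (n : Nat) : Par (var n) (var n)
  | app {t t' s s' : Lam} : Par t t' → Par s s' → Par (app t s) (app t' s')
  | lam {t t' : Lam} : Par t t' → Par (lam t) (lam t')
  | beta {t t' s s' : Lam} : Par t t' → Par s s' → Par (app (lam t) s) (subst 0 s' t')
  | eta {t t' : Lam} : Par t t' → Par (lam (app (lift 0 t) (var 0))) t'

theorem par_refl : ∀ t, Par t t := by
  intro t
  induction t with
  | var n => exact Par.var n
  | app a b iha ihb => exact Par.app iha ihb
  | lam a iha => exact Par.lam iha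

theorem par_var_inv {n : Nat} {s : Lam} (h : Par (var n) s) : s = var n := by
  cases h; rfl

theorem par_app_inv {f a s : Lam} (h : Par (app f a) s) :
    (∃ f' a', s = app f' a' ∧ Par f f' ∧ Par a a') ∨
    (∃ b b' a', f = lam b ∧ Par b b' ∧ Par a a' ∧ s = subst 0 a' b') := by
  cases h with
  | app hf ha => exact Or.inl ⟨_, _, rfl, hf, ha⟩
  | beta hb ha => exact Or.inr ⟨_, _, _, rfl, hb, ha, rfl⟩

theorem par_lam_inv {b s : Lam} (h : Par (lam b) s) :
    (∃ b', s = lam b' ∧ Par b b') ∨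
    (∃ u u', b = app (lift 0 u) (var 0) ∧ Par u u' ∧ s = u') := by
  cases h with
  | lam hb => exact Or.inl ⟨_, rfl, hb⟩
  | eta hu => exact Or.inr ⟨_, _, rfl, hu, rfl⟩

theorem lift_var0 (d : Nat) : lift (d + 1) (var 0) = var 0 := by
  simp [lift]

theorem subst_var0 (d : Nat) (s : Lam) : subst (d + 1) s (var 0) = var 0 := by
  simp only [subst]
  split_ifs <;> first | rfl | contradiction | (exfalso; omega)

theorem par_lift {t t' : Lam} (h : Par t t') : ∀ d, Par (lift d t) (lift d t') := by
  induction h with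
  | var n => intro d; simp only [lift]; exact par_refl _
  | app hf ha ihf iha => intro d; exact Par.app (ihf d) (iha d)
  | lam hb ihb => intro d; exact Par.lam (ihb (d + 1))
  | beta hb ha ihb iha =>
    intro d
    simp only [lift]
    rw [lift_subst_le (Nat.zero_le d)]
    exact Par.beta (ihb (d + 1)) (iha d)
  | eta hu ihu =>
    intro d
    simp only [lift]
    have hv : (if 0 < d + 1 then (0:Nat) else 0 + 1) = 0 := if_pos (Nat.succ_pos d)
    rw [hv, show lift (d + 1) (lift 0 _) = lift 0 (lift d _) from
      (lift_lift (Nat.zero_le d) _).symm]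
    exact Par.eta (ihu d)

theorem par_subst {t t' : Lam} (h : Par t t') :
    ∀ d {s s'}, Par s s' → Par (subst d s t) (subst d s' t') := by
  induction h with
  | var n =>
    intro d s s' hs
    simp only [subst]
    split_ifs <;> first | exact hs | exact par_refl _
  | app hf ha ihf iha => intro d s s' hs; exact Par.app (ihf d hs) (iha d hs)
  | lam hb ihb => intro d s s' hs; exact Par.lam (ihb (d + 1) (par_lift hs 0))
  | beta hb ha ihb iha =>
    intro d s s' hs
    simp only [subst]
    rw [subst_subst (Nat.zero_le d)]
    exact Par.beta (ihb (d + 1) (par_lift hs 0)) (iha d hs)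
  | eta hu ihu =>
    intro d s s' hs
    simp only [subst]
    have hv : (if 0 = d + 1 then lift 0 s else if d + 1 < 0 then var (0 - 1) else var 0)
        = var 0 := by split_ifs <;> first | rfl | contradiction | (exfalso; omega)
    rw [hv, show subst (d + 1) (lift 0 s) (lift 0 _) = lift 0 (subst d s _) from
      (lift_subst_ge (Nat.zero_le d) _ _).symm]
    exact Par.eta (ihu d hs)
/-! ### Inversion of parallel reduction under lifting -/

theorem lift_eq_var0 {k : Nat} {t : Lam} (h : lift k t = var 0) : t = var 0 := by
  cases t with
  | var m =>
    simp only [lift] at h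
    injection h with h
    split_ifs at h <;> (congr 1) <;> omega
  | app a b => simp [lift] at h
  | lam a => simp [lift] at h

theorem lift_lift_inv {i j : Nat} (h : i ≤ j) :
    ∀ f u, lift (j + 1) f = lift i u → ∃ g, f = lift i g ∧ u = lift j g := by
  intro f
  induction f generalizing i j with
  | var n =>
    intro u hu
    cases u with
    | var m =>
      simp only [lift] at hu
      injection hu with hu
      refine ⟨var (if n < i then n else n - 1), ?_, ?_⟩ <;> simp only [lift] <;>
        split_ifs at hu ⊢ <;> first | rfl | contradiction | (exfalso; omega) | (congr 1; omega)
    | app a b => simp [lift] at hu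
    | lam a => simp [lift] at hu
  | app a b iha ihb =>
    intro u hu
    cases u with
    | var m => simp only [lift] at hu; cases hu
    | app a2 b2 =>
      simp only [lift] at hu
      injection hu with h1 h2
      obtain ⟨g1, hg1, hg1'⟩ := iha h a2 h1
      obtain ⟨g2, hg2, hg2'⟩ := ihb h b2 h2
      exact ⟨app g1 g2, by simp [lift, hg1, hg2], by simp [lift, hg1', hg2']⟩
    | lam a2 => simp [lift] at hu
  | lam a iha =>
    intro u hu
    cases u with
    | var m => simp only [lift] at hu; cases hu
    | app a2 b2 => simp [lift] at hu
    | lam a2 =>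
      simp only [lift] at hu
      injection hu with h1
      obtain ⟨g1, hg1, hg1'⟩ := iha (by omega : i + 1 ≤ j + 1) a2 h1
      exact ⟨lam g1, by simp [lift, hg1], by simp [lift, hg1']⟩

theorem par_lift_inv_aux {a s : Lam} (h : Par a s) :
    ∀ {t : Lam} {d : Nat}, a = lift d t → ∃ t', s = lift d t' ∧ Par t t' := by
  induction h with
  | var n =>
    intro t d ht
    exact ⟨t, ht, par_refl t⟩
  | app hf ha ihf iha =>
    intro t d ht
    cases t with
    | var m => simp only [lift] at ht; cases ht
    | app tf ta =>
      simp only [lift] at ht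
      injection ht with h1 h2
      obtain ⟨f1, hf1, hf1'⟩ := ihf h1
      obtain ⟨a1, ha1, ha1'⟩ := iha h2
      exact ⟨app f1 a1, by simp [lift, hf1, ha1], Par.app hf1' ha1'⟩
    | lam ta => simp [lift] at ht
  | lam hb ihb =>
    intro t d ht
    cases t with
    | var m => simp only [lift] at ht; cases ht
    | app tf ta => simp [lift] at ht
    | lam tb =>
      simp only [lift] at ht
      injection ht with h1
      obtain ⟨b1, hb1, hb1'⟩ := ihb h1
      exact ⟨lam b1, by simp [lift, hb1], Par.lam hb1'⟩
  | beta hb ha ihb iha =>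
    intro t d ht
    cases t with
    | var m => simp only [lift] at ht; cases ht
    | lam ta => simp [lift] at ht
    | app t1 t2 =>
      simp only [lift] at ht
      injection ht with h1 h2
      cases t1 with
      | var m => simp only [lift] at h1; cases h1
      | app x y => simp [lift] at h1
      | lam b0 =>
        simp only [lift] at h1
        injection h1 with h1
        obtain ⟨b1, hb1, hb1'⟩ := ihb h1
        obtain ⟨a1, ha1, ha1'⟩ := iha h2
        refine ⟨subst 0 a1 b1, ?_, Par.beta hb1' ha1'⟩
        rw [hb1, ha1, ← lift_subst_le (Nat.zero_le d)]
  | eta hu ihu =>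
    intro t d ht
    cases t with
    | var m => simp only [lift] at ht; cases ht
    | app tf ta => simp [lift] at ht
    | lam tb =>
      simp only [lift] at ht
      injection ht with h1
      cases tb with
      | var m => simp only [lift] at h1; cases h1
      | lam x => simp [lift] at h1
      | app g1 g2 =>
        simp only [lift] at h1
        injection h1 with h1 h2
        have hg2 : g2 = var 0 := lift_eq_var0 h2.symm
        obtain ⟨g, hg, hg'⟩ := lift_lift_inv (Nat.zero_le d) g1 _ h1.symm
        obtain ⟨g', hgs, hg's⟩ := ihu hg'
        refine ⟨g', hgs, ?_⟩
        rw [hg2, hg]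
        exact Par.eta hg's

theorem par_lift_inv {t s : Lam} {d : Nat} (h : Par (lift d t) s) :
    ∃ t', s = lift d t' ∧ Par t t' := par_lift_inv_aux h rfl
/-! ### Complete development -/

def size : Lam → Nat
  | var _ => 1
  | app a b => size a + size b + 1
  | lam a => size a + 1

theorem size_pos : ∀ t, 0 < size t := by
  intro t; cases t <;> simp [size] <;> omega

theorem size_lift (d : Nat) : ∀ t, size (lift d t) = size t := by
  intro t
  induction t generalizing d with
  | var n => simp [lift, size]
  | app a b iha ihb => simp [lift, size, iha, ihb]
  | lam a iha => simp [lift, size, iha]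

def unlift? (d : Nat) : Lam → Option Lam
  | var n => if n = d then none else if d < n then some (var (n - 1)) else some (var n)
  | app a b => do pure (app (← unlift? d a) (← unlift? d b))
  | lam a => do pure (lam (← unlift? (d + 1) a))

theorem unlift_lift (d : Nat) : ∀ t, unlift? d (lift d t) = some t := by
  intro t
  induction t generalizing d with
  | var n =>
    simp only [lift, unlift?]
    split_ifs <;> first | rfl | contradiction | (exfalso; omega) | (simp; omega) | (simp; congr 1; omega)
  | app a b iha ihb => simp [lift, unlift?, iha, ihb]
  | lam a iha => simp [lift, unlift?, iha]

theorem unlift_some : ∀ {t u : Lam} {d : Nat}, unlift? d t = some u → t = lift d u := by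
  intro t
  induction t with
  | var n =>
    intro u d h
    simp only [unlift?] at h
    split_ifs at h with h1 h2 <;> cases h <;> simp only [lift] <;>
      congr 1 <;> split_ifs <;> omega
  | app a b iha ihb =>
    intro u d h
    simp only [unlift?, Option.bind_eq_bind, Option.bind_eq_some_iff, Option.pure_def, Option.some.injEq] at h
    obtain ⟨a', ha, b', hb, rfl⟩ := h
    simp [lift, ← iha ha, ← ihb hb]
  | lam a iha =>
    intro u d h
    simp only [unlift?, Option.bind_eq_bind, Option.bind_eq_some_iff, Option.pure_def, Option.some.injEq] at h
    obtain ⟨a', ha, rfl⟩ := h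
    simp [lift, ← iha ha]

def etaView : Lam → Option Lam
  | app f (var 0) => unlift? 0 f
  | _ => none

theorem etaView_size {b u : Lam} (h : etaView b = some u) : size u < size b := by
  match b, h with
  | app f (var 0), h =>
    have : f = lift 0 u := unlift_some h
    have : size f = size u := by rw [this, size_lift]
    simp [size]; omega

theorem etaView_some {b u : Lam} (h : etaView b = some u) :
    b = app (lift 0 u) (var 0) := by
  match b, h with
  | app f (var 0), h => rw [← unlift_some h]

def dev : Lam → Lam
  | var n => var n
  | app (lam b) a => subst 0 (dev a) (dev b)
  | app (var n) a => app (var n) (dev a)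
  | app (app f g) a => app (dev (app f g)) (dev a)
  | lam b =>
    match hu : etaView b with
    | some u => dev u
    | none => lam (dev b)
termination_by t => size t
decreasing_by
  all_goals simp [size]
  all_goals try omega
  · have := etaView_size hu; omega

theorem dev_var (n : Nat) : dev (var n) = var n := by simp [dev]

theorem dev_app_lam (b a : Lam) : dev (app (lam b) a) = subst 0 (dev a) (dev b) := by
  simp [dev]

theorem dev_app_var (n : Nat) (a : Lam) : dev (app (var n) a) = app (var n) (dev a) := by
  simp [dev]

theorem dev_app_app (f g a : Lam) :
    dev (app (app f g) a) = app (dev (app f g)) (dev a) := by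
  rw [dev]

theorem dev_lam_eta {b u : Lam} (h : etaView b = some u) : dev (lam b) = dev u := by
  rw [dev, h]

theorem dev_lam_ne {b : Lam} (h : etaView b = none) : dev (lam b) = lam (dev b) := by
  rw [dev, h]
/-! ### dev commutes with lift; the triangle property -/

theorem unlift_lift_exch : ∀ (f : Lam) {i d : Nat}, i ≤ d →
    unlift? i (lift (d + 1) f) = Option.map (lift d) (unlift? i f) := by
  intro f
  induction f with
  | var n =>
    intro i d h
    simp only [lift, unlift?]
    split_ifs <;> simp only [unlift?, lift, Option.map_some, Option.map_none] <;>
      (try split_ifs) <;> first | rfl | contradiction | (exfalso; omega) |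
        (simp only [Option.some.injEq]; congr 1; omega)
  | app a b iha ihb =>
    intro i d h
    simp only [lift, unlift?, Option.bind_eq_bind]
    rw [iha h, ihb h]
    cases unlift? i a <;> cases unlift? i b <;> simp [lift]
  | lam a iha =>
    intro i d h
    simp only [lift, unlift?, Option.bind_eq_bind]
    rw [iha (by omega : i + 1 ≤ d + 1)]
    cases unlift? (i + 1) a <;> simp [lift]

theorem etaView_lift (d : Nat) : ∀ b : Lam,
    etaView (lift (d + 1) b) = Option.map (lift d) (etaView b) := by
  intro b
  match b with
  | var n => simp [lift, etaView]
  | lam x => simp [lift, etaView]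
  | app f (var 0) =>
    have h0 : lift (d + 1) (var 0) = var 0 := lift_var0 d
    simp only [lift] at h0 ⊢
    rw [h0]
    exact unlift_lift_exch f (Nat.zero_le d)
  | app f (var (n + 1)) =>
    simp only [lift]
    have : (if n + 1 < d + 1 then n + 1 else n + 1 + 1) = (if n < d then n else n + 1) + 1 := by
      split_ifs <;> omega
    rw [this]
    simp [etaView]
  | app f (app x y) => simp [lift, etaView]
  | app f (lam x) => simp [lift, etaView]

theorem dev_lift_aux : ∀ (n : Nat) (t : Lam), size t ≤ n →
    ∀ d, dev (lift d t) = lift d (dev t) := by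
  intro n
  induction n with
  | zero => intro t ht; have := size_pos t; omega
  | succ n ih =>
    intro t ht d
    match t with
    | var m => simp [lift, dev_var]
    | app (var m) a =>
      simp only [size] at ht
      simp only [lift, dev_app_var, ih a (by simp [size] at ht ⊢; omega) d]
    | app (app f g) a =>
      simp only [size] at ht
      have h1 : size (app f g) ≤ n := by simp [size]; omega
      have h2 : size a ≤ n := by omega
      show dev (app (app (lift d f) (lift d g)) (lift d a)) = lift d (dev (app (app f g) a))
      rw [dev_app_app, dev_app_app]
      show app (dev (lift d (app f g))) (dev (lift d a)) = _
      rw [ih (app f g) h1 d, ih a h2 d]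
      rfl
    | app (lam b) a =>
      simp only [size] at ht
      simp only [lift, dev_app_lam]
      rw [ih a (by omega) d, ih b (by omega) (d + 1), lift_subst_le (Nat.zero_le d)]
    | lam b =>
      simp only [size] at ht
      simp only [lift]
      cases hv : etaView b with
      | none =>
        have hv' : etaView (lift (d + 1) b) = none := by rw [etaView_lift, hv]; rfl
        rw [dev_lam_ne hv', dev_lam_ne hv, lift, ih b (by omega) (d + 1)]
      | some u =>
        have hv' : etaView (lift (d + 1) b) = some (lift d u) := by
          rw [etaView_lift, hv]; rfl
        have hu : size u < size b := etaView_size hv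
        rw [dev_lam_eta hv', dev_lam_eta hv, ih u (by omega) d]

theorem dev_lift (t : Lam) (d : Nat) : dev (lift d t) = lift d (dev t) :=
  dev_lift_aux (size t) t le_rfl d

def devApp : Lam → Lam → Lam
  | lam b, x => subst 0 x (dev b)
  | f, x => app (dev f) x

theorem dev_app (f a : Lam) : dev (app f a) = devApp f (dev a) := by
  cases f with
  | var n =>
    rw [dev_app_var]
    show app (var n) (dev a) = app (dev (var n)) (dev a)
    rw [dev_var]
  | app x y => rw [dev_app_app]; rfl
  | lam b => rw [dev_app_lam]; rfl

theorem devApp_nonlam {f : Lam} (h : ∀ b, f ≠ lam b) (x : Lam) :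
    devApp f x = app (dev f) x := by
  cases f with
  | var n => rfl
  | app a b => rfl
  | lam b => exact absurd rfl (h b)

theorem triangle_aux : ∀ (n : Nat) (t : Lam), size t ≤ n →
    (∀ s, Par t s → Par s (dev t)) ∧
    (∀ s a₂ ad, Par t s → Par a₂ ad → Par (app s a₂) (devApp t ad)) := by
  intro n
  induction n with
  | zero => intro t ht; have := size_pos t; omega
  | succ n ih =>
    intro t ht
    have T : ∀ s, Par t s → Par s (dev t) := by
      intro s hp
      cases hp with
      | var m => rw [dev_var]; exact Par.var m
      | @app f f' a a' hf ha =>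
        have hsz : size f ≤ n ∧ size a ≤ n := by
          simp only [size] at ht; have := size_pos f; have := size_pos a
          constructor <;> omega
        rw [dev_app]
        exact (ih f hsz.1).2 f' a' (dev a) hf ((ih a hsz.2).1 a' ha)
      | @lam b b' hb =>
        have hbsz : size b ≤ n := by simp only [size] at ht; omega
        cases hv : etaView b with
        | none =>
          rw [dev_lam_ne hv]
          exact Par.lam ((ih b hbsz).1 b' hb)
        | some u =>
          rw [dev_lam_eta hv]
          have hbe := etaView_some hv
          have husz : size u ≤ n := by have := etaView_size hv; omega
          subst hbe
          rcases par_app_inv hb with ⟨g, v, rfl, hg, hv0⟩ | ⟨M, M', v', heq, hM, hv0, rfl⟩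
          · rw [par_var_inv hv0] at *
            obtain ⟨u1, rfl, hu1⟩ := par_lift_inv hg
            exact Par.eta ((ih u husz).1 u1 hu1)
          · -- lift 0 u = lam M
            cases u with
            | var m => simp [lift] at heq
            | app x y => simp [lift] at heq
            | lam N =>
              simp only [lift] at heq
              injection heq with heq
              subst heq
              rw [par_var_inv hv0]
              obtain ⟨N1, rfl, hN1⟩ := par_lift_inv (d := 1) hM
              rw [subst_var_lift 0 N1]
              exact (ih (lam N) husz).1 (lam N1) (Par.lam hN1)
      | @beta b b' a a' hb ha =>
        have hsz : size b ≤ n ∧ size a ≤ n := by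
          simp only [size] at ht; constructor <;> omega
        rw [dev_app_lam]
        exact par_subst ((ih b hsz.1).1 b' hb) 0 ((ih a hsz.2).1 a' ha)
      | @eta u _ hu =>
        have husz : size u ≤ n := by
          simp only [size, size_lift] at ht; omega
        have hv : etaView (app (lift 0 u) (var 0)) = some u := unlift_lift 0 u
        rw [dev_lam_eta hv]
        exact (ih u husz).1 s hu
    refine ⟨T, ?_⟩
    intro s a₂ ad hp ha
    match t, hp with
    | var m, hp => exact Par.app (T s hp) ha
    | app x y, hp => exact Par.app (T s hp) ha
    | lam b, hp =>
      have hbsz : size b ≤ n := by simp only [size] at ht; omega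
      show Par (app s a₂) (subst 0 ad (dev b))
      rcases par_lam_inv hp with ⟨b', rfl, hb⟩ | ⟨u, u', hbe, hu, rfl⟩
      · exact Par.beta ((ih b hbsz).1 b' hb) ha
      · subst hbe
        cases u with
        | var m =>
          rw [show lift 0 (var m) = var (m + 1) from rfl, dev_app_var]
          show Par _ (app (subst 0 ad (var (m + 1))) (subst 0 ad (dev (var 0))))
          rw [dev_var]
          have e1 : subst 0 ad (var (m + 1)) = var m := by
            simp only [subst]; split_ifs <;> first | rfl | contradiction | (exfalso; omega)
          have e2 : subst 0 ad (var 0) = ad := by simp [subst]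
          rw [e1, e2]
          have husz : size (var m) ≤ n := by simp only [size] at hbsz ⊢; omega
          have : dev (var m) = var m := dev_var m
          exact Par.app (this ▸ (ih (var m) husz).1 s hu) ha
        | app x y =>
          rw [show lift 0 (app x y) = app (lift 0 x) (lift 0 y) from rfl, dev_app_app]
          show Par _ (app (subst 0 ad (dev (app (lift 0 x) (lift 0 y)))) (subst 0 ad (dev (var 0))))
          rw [show app (lift 0 x) (lift 0 y) = lift 0 (app x y) from rfl, dev_lift, dev_var,
            subst_lift]
          have e2 : subst 0 ad (var 0) = ad := by simp [subst]
          rw [e2]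
          have husz : size (app x y) ≤ n := by
            have h3 : size (lift 0 (app x y)) = size (app x y) := size_lift 0 _
            simp only [size] at hbsz h3 ⊢; omega
          exact Par.app ((ih (app x y) husz).1 s hu) ha
        | lam N =>
          show Par _ (subst 0 ad (dev (app (lam (lift 1 N)) (var 0))))
          rw [dev_app_lam, dev_var, show lift 1 N = lift (0 + 1) N from rfl, dev_lift,
            subst_var_lift 0]
          have husz : size (lam N) ≤ n := by
            have h3 : size (lift 0 (lam N)) = size (lam N) := size_lift 0 _
            simp only [size] at hbsz h3 ⊢; omega
          exact (ih (lam N) husz).2 s a₂ ad hu ha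

theorem par_triangle {t s : Lam} (h : Par t s) : Par s (dev t) :=
  (triangle_aux (size t) t le_rfl).1 s h

theorem par_diamond {t s u : Lam} (h1 : Par t s) (h2 : Par t u) :
    ∃ v, Par s v ∧ Par u v :=
  ⟨dev t, par_triangle h1, par_triangle h2⟩
/-! ### Confluence and Church–Rosser -/

def Pars : Lam → Lam → Prop := Relation.ReflTransGen Par

theorem pars_refl (t : Lam) : Pars t t := Relation.ReflTransGen.refl

theorem pars_single {t s : Lam} (h : Par t s) : Pars t s :=
  Relation.ReflTransGen.single h

theorem pars_strip {t s u : Lam} (h : Par t s) (h2 : Pars t u) :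
    ∃ v, Pars s v ∧ Par u v := by
  induction h2 with
  | refl => exact ⟨s, pars_refl s, h⟩
  | tail _ hstep ih =>
    obtain ⟨v, hsv, huv⟩ := ih
    obtain ⟨w, hvw, hw⟩ := par_diamond huv hstep
    exact ⟨w, hsv.tail hvw, hw⟩

theorem pars_confluent {t s u : Lam} (h1 : Pars t s) (h2 : Pars t u) :
    ∃ v, Pars s v ∧ Pars u v := by
  induction h1 with
  | refl => exact ⟨u, h2, pars_refl u⟩
  | tail _ hstep ih =>
    obtain ⟨v, hsv, huv⟩ := ih
    obtain ⟨w, hvw, hw⟩ := pars_strip hstep hsv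
    exact ⟨w, hvw, huv.tail hw⟩

theorem pars_app {f f' a a' : Lam} (hf : Pars f f') (ha : Pars a a') :
    Pars (app f a) (app f' a') := by
  induction hf with
  | refl =>
    induction ha with
    | refl => exact pars_refl _
    | tail _ hstep ih => exact ih.tail (Par.app (par_refl _) hstep)
  | tail _ hstep ih => exact ih.tail (Par.app hstep (par_refl _))

theorem pars_lam {b b' : Lam} (hb : Pars b b') : Pars (lam b) (lam b') := by
  induction hb with
  | refl => exact pars_refl _
  | tail _ hstep ih => exact ih.tail (Par.lam hstep)

theorem betaEta_join {t s : Lam} (h : BetaEta t s) : ∃ v, Pars t v ∧ Pars s v := by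
  induction h with
  | beta t s => exact ⟨_, pars_single (Par.beta (par_refl t) (par_refl s)), pars_refl _⟩
  | eta t => exact ⟨_, pars_single (Par.eta (par_refl t)), pars_refl _⟩
  | refl t => exact ⟨t, pars_refl t, pars_refl t⟩
  | symm _ ih => obtain ⟨v, h1, h2⟩ := ih; exact ⟨v, h2, h1⟩
  | trans _ _ ih1 ih2 =>
    obtain ⟨v1, h1, h2⟩ := ih1
    obtain ⟨v2, h3, h4⟩ := ih2
    obtain ⟨w, hw1, hw2⟩ := pars_confluent h2 h3
    exact ⟨w, h1.trans hw1, h4.trans hw2⟩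
  | congApp _ _ ih1 ih2 =>
    obtain ⟨v1, h1, h2⟩ := ih1
    obtain ⟨v2, h3, h4⟩ := ih2
    exact ⟨app v1 v2, pars_app h1 h3, pars_app h2 h4⟩
  | congLam _ ih =>
    obtain ⟨v, h1, h2⟩ := ih
    exact ⟨lam v, pars_lam h1, pars_lam h2⟩
/-! ### The normal forms `λx. xⁿ (λy. y (x y))` -/

def NW : Lam := lam (app (var 0) (app (var 1) (var 0)))

def M (k : Nat) : Lam := lam (npow (var 0) k NW)

theorem par_NW {s : Lam} (h : Par NW s) : s = NW := by
  rcases par_lam_inv h with ⟨b', rfl, hb⟩ | ⟨u, u', hbe, hu, rfl⟩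
  · rcases par_app_inv hb with ⟨f', a', rfl, hf, ha⟩ | ⟨b, b', a', heq, _, _, _⟩
    · rw [par_var_inv hf]
      rcases par_app_inv ha with ⟨x', y', rfl, hx, hy⟩ | ⟨b, b', a', heq, _, _, _⟩
      · rw [par_var_inv hx, par_var_inv hy]; rfl
      · exact absurd heq (by simp)
    · exact absurd heq (by simp)
  · exfalso
    injection hbe with h1 h2
    exact absurd h2 (by simp)

theorem par_body : ∀ (k : Nat) {s : Lam}, Par (npow (var 0) k NW) s → s = npow (var 0) k NW := by
  intro k
  induction k with
  | zero => exact fun h => par_NW h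
  | succ k ih =>
    intro s h
    rcases par_app_inv h with ⟨f', a', rfl, hf, ha⟩ | ⟨b, b', a', heq, _, _, _⟩
    · rw [par_var_inv hf, ih ha]; rfl
    · exact absurd heq (by simp)

theorem npow_body_ne_var0 (k : Nat) : npow (var 0) k NW ≠ var 0 := by
  cases k <;> simp [npow, NW]

theorem par_M (k : Nat) {s : Lam} (h : Par (M k) s) : s = M k := by
  rcases par_lam_inv h with ⟨b', rfl, hb⟩ | ⟨u, u', hbe, hu, rfl⟩
  · rw [par_body k hb]; rfl
  · exfalso
    cases k with
    | zero => exact absurd hbe (by simp [npow, NW])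
    | succ k =>
      injection hbe with h1 h2
      exact absurd h2 (npow_body_ne_var0 k)

theorem pars_M (k : Nat) {s : Lam} (h : Pars (M k) s) : s = M k := by
  induction h with
  | refl => rfl
  | tail _ hstep ih => rw [ih] at hstep; exact par_M k hstep

theorem npow_body_inj : ∀ a b : Nat, npow (var 0) a NW = npow (var 0) b NW → a = b := by
  intro a
  induction a with
  | zero =>
    intro b h
    cases b with
    | zero => rfl
    | succ b => exact absurd h (by simp [npow, NW])
  | succ a ih =>
    intro b h
    cases b with
    | zero => exact absurd h (by simp [npow, NW])
    | succ b =>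
      simp only [npow, app.injEq] at h
      rw [ih b h.2]

theorem M_inj {a b : Nat} (h : M a = M b) : a = b := by
  apply npow_body_inj
  injection h

/-! ### Part 1: computation of the normal form of `sapp O (n+1)` -/

theorem subst_npow (d : Nat) (s e a : Lam) (k : Nat) :
    subst d s (npow e k a) = npow (subst d s e) k (subst d s a) := by
  induction k with
  | zero => rfl
  | succ k ih => simp only [npow, subst, ih]

theorem lift_npow (d : Nat) (e a : Lam) (k : Nat) :
    lift d (npow e k a) = npow (lift d e) k (lift d a) := by
  induction k with
  | zero => rfl
  | succ k ih => simp only [npow, lift, ih]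

theorem lift0_M (k : Nat) : lift 0 (M k) = M k := by
  show lam (lift 1 (npow (var 0) k NW)) = M k
  rw [lift_npow, show lift 1 (var 0) = var 0 from by decide,
    show lift 1 NW = NW from by decide]
  rfl

theorem npow_cong {e a a' : Lam} (h : BetaEta a a') (k : Nat) :
    BetaEta (npow e k a) (npow e k a') := by
  induction k with
  | zero => exact h
  | succ k ih => exact BetaEta.congApp (BetaEta.refl e) ih

/-- T = λy. y (O y) -/
def T : Lam := lam (app (var 0) (app O (var 0)))

/-- T' = λy. y (λz. z (y z)) -/
def T' : Lam := lam (app (var 0) NW)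

theorem step1 (k : Nat) : BetaEta (app (M k) O) (npow O k T) := by
  have h := BetaEta.beta (npow (var 0) k NW) O
  rwa [subst_npow, show subst 0 O (var 0) = O from by decide,
    show subst 0 O NW = T from by decide] at h

theorem step2 : BetaEta T T' := by
  apply BetaEta.congLam
  apply BetaEta.congApp (BetaEta.refl (var 0))
  have h := BetaEta.beta (lam (app (var 0) (app (var 1) (var 0)))) (var 0)
  rwa [show subst 0 (var 0) (lam (app (var 0) (app (var 1) (var 0)))) = NW from by decide] at h

theorem step3 : ∀ k : Nat, BetaEta (npow O k T') (M (k + 1)) := by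
  intro k
  induction k with
  | zero => exact BetaEta.refl T'
  | succ k ih =>
    show BetaEta (app O (npow O k T')) (M (k + 2))
    apply BetaEta.trans (BetaEta.congApp (BetaEta.refl O) ih)
    have h1 := BetaEta.beta (lam (app (var 0) (app (var 1) (var 0)))) (M (k + 1))
    have e1 : subst 0 (M (k + 1)) (lam (app (var 0) (app (var 1) (var 0))))
        = lam (app (var 0) (app (lift 0 (M (k + 1))) (var 0))) := by
      simp only [subst]
      norm_num
    rw [e1, lift0_M] at h1
    apply BetaEta.trans h1
    apply BetaEta.congLam
    apply BetaEta.congApp (BetaEta.refl (var 0))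
    have h2 := BetaEta.beta (npow (var 0) (k + 1) NW) (var 0)
    rwa [subst_npow, show subst 0 (var 0) (var 0) = var 0 from by decide,
      show subst 0 (var 0) NW = NW from by decide] at h2

theorem part1 : ∀ n : Nat, BetaEta (sapp O (n + 1)) (M n) := by
  intro n
  induction n with
  | zero => exact BetaEta.refl O
  | succ n ih =>
    show BetaEta (app (sapp O (n + 1)) O) (M (n + 1))
    apply BetaEta.trans (BetaEta.congApp ih (BetaEta.refl O))
    apply BetaEta.trans (step1 n)
    apply BetaEta.trans (npow_cong step2 n)
    exact step3 n

theorem O_no_rho :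
    (∀ n : Nat,
      BetaEta (sapp O (n + 1))
        (lam (npow (var 0) n (lam (app (var 0) (app (var 1) (var 0))))))) ∧
    (∀ i j : Nat, 1 ≤ i → 1 ≤ j → ¬ BetaEta (sapp O i) (sapp O (i + j))) := by
  constructor
  · exact part1
  · intro i j hi hj h
    obtain ⟨n, rfl⟩ : ∃ n, i = n + 1 := ⟨i - 1, by omega⟩
    have h1 := part1 n
    have h2 : BetaEta (sapp O (n + 1 + j)) (M (n + j)) := by
      have := part1 (n + j)
      rwa [show n + j + 1 = n + 1 + j by omega] at this
    have h3 : BetaEta (M n) (M (n + j)) := (h1.symm.trans h).trans h2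
    obtain ⟨v, hv1, hv2⟩ := betaEta_join h3
    have e2 := pars_M (n + j) hv2
    rw [pars_M n hv1] at e2
    have := M_inj e2
    omega

end Lam
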